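/- Let α > 0 and let h : ℝ → ℝ satisfy: (i) h(x+1) = h(x) for all x ∈ ℝ; (ii) h(x) = −h(1−x) for all x ∈ [0,1]; (iii) h(z) = z^α · h(2 − 1/z) for all z ∈ [1/2, 1]. Then h(x) = x^α · h(2 − 1/x) for all x ∈ (0, 1/2]. -/
import Mathlib


/-- Under the hypotheses on the periodically extended `h`, the equation
`h(x) = x^α h(2 - 1/x)` holds for all `x ∈ (0, 1/2]`. -/
theorem stmt13 (α : ℝ) (hα : 0 < α) (h : ℝ → ℝ)
    (hper : ∀ x : ℝ, h (x + 1) = h x)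
    (hanti : ∀ x : ℝ, 0 ≤ x → x ≤ 1 → h x = -h (1 - x))
    (hfe : ∀ z : ℝ, 1 / 2 ≤ z → z ≤ 1 → h z = z ^ α * h (2 - 1 / z)) :
    ∀ x : ℝ, 0 < x → x ≤ 1 / 2 → h x = x ^ α * h (2 - 1 / x) := by
  -- Key step: for x ∈ (0, 1/2], h x = (1-x)^α * h (x/(1-x)).
  have key : ∀ x : ℝ, 0 < x → x ≤ 1 / 2 → h x = (1 - x) ^ α * h (x / (1 - x)) := by
    intro x hx0 hx2
    have h1x : (0:ℝ) < 1 - x := by linarith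
    have e1 : h x = -h (1 - x) := hanti x hx0.le (by linarith)
    have e2 : h (1 - x) = (1 - x) ^ α * h (2 - 1 / (1 - x)) :=
      hfe (1 - x) (by linarith) (by linarith)
    have e3 : 2 - 1 / (1 - x) = (1 - 2*x) / (1 - x) := by
      field_simp; ring
    have hu0 : (0:ℝ) ≤ (1 - 2*x) / (1 - x) := div_nonneg (by linarith) h1x.le
    have hu1 : (1 - 2*x) / (1 - x) ≤ 1 := by
      rw [div_le_one h1x]; linarith
    have e4 : h ((1 - 2*x) / (1 - x)) = -h (1 - (1 - 2*x) / (1 - x)) :=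
      hanti _ hu0 hu1
    have e5 : 1 - (1 - 2*x) / (1 - x) = x / (1 - x) := by
      field_simp; ring
    rw [e1, e2, e3, e4, e5]; ring
  -- Induct on n with 1/x ≤ n.
  have main : ∀ n : ℕ, ∀ x : ℝ, 0 < x → x ≤ 1 / 2 → 1 / x ≤ n →
      h x = x ^ α * h (2 - 1 / x) := by
    intro n
    induction n with
    | zero => intro x hx0 hx2 hn; exfalso
              have : (0:ℝ) < 1 / x := by positivity
              simp at hn; linarith
    | succ n ih =>
      intro x hx0 hx2 hn
      have h1x : (0:ℝ) < 1 - x := by linarith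
      have hw0 : 0 < x / (1 - x) := by positivity
      have hwval : (1:ℝ) / (x / (1 - x)) = 1 / x - 1 := by
        field_simp
      have hper' : h (2 - 1 / (x / (1 - x))) = h (2 - 1 / x) := by
        rw [hwval]
        have : 2 - (1 / x - 1) = (2 - 1 / x) + 1 := by ring
        rw [this, hper]
      have hmul : (1 - x) ^ α * (x / (1 - x)) ^ α = x ^ α := by
        rw [← Real.mul_rpow h1x.le hw0.le]
        congr 1
        field_simp
      rcases le_or_gt (1/3 : ℝ) x with hc | hc
      · -- x ∈ [1/3, 1/2], so w ∈ [1/2, 1]: use hfe directly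
        have hw12 : 1 / 2 ≤ x / (1 - x) := by
          rw [le_div_iff₀ h1x]; linarith
        have hw1 : x / (1 - x) ≤ 1 := by
          rw [div_le_one h1x]; linarith
        have := hfe _ hw12 hw1
        rw [key x hx0 hx2, this, hper', ← mul_assoc, hmul]
      · -- x < 1/3, so w ≤ 1/2 and 1/w = 1/x - 1 ≤ n: use ih
        have hw2 : x / (1 - x) ≤ 1 / 2 := by
          rw [div_le_div_iff₀ h1x (by norm_num)]; linarith
        have hwn : 1 / (x / (1 - x)) ≤ n := by
          rw [hwval]
          have : (n : ℝ) + 1 = ((n + 1 : ℕ) : ℝ) := by push_cast; ring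
          linarith [hn]
        have := ih _ hw0 hw2 hwn
        rw [key x hx0 hx2, this, hper', ← mul_assoc, hmul]
  intro x hx0 hx2
  exact main ⌈1 / x⌉₊ x hx0 hx2 (Nat.le_ceil _)
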